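/- Let |GHZ₂⟩ = (|0⟩⊗|0⟩ + |1⟩⊗|1⟩)/√2. For all φ₁, φ₂ ∈ ℝ, consider the two-party Bell scenario in which both Alice's and Bob's two measurements are given by the equatorial orthonormal bases B(π/2, φ₁) = {|π/2, φ₁⟩, |π/2, π + φ₁⟩} and B(π/2, φ₂) = {|π/2, φ₂⟩, |π/2, π + φ₂⟩}. Then the contextual fraction of the Born-rule empirical model of |GHZ₂⟩ with respect to this scenario satisfies CF ≤ √2 − 1; in particular the model is never strongly contextual (CF < 1). -/

import Mathlib

open scoped ComplexConjugate

/-- Standard Hermitian inner product on `ℂ²` (conjugate-linear in the first slot). -/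
noncomputable def ip2 (u v : Fin 2 → ℂ) : ℂ := ∑ i, conj (u i) * v i

/-- Tensor product `u ⊗ v ∈ ℂ² ⊗ ℂ²`, as a function on `Fin 2 × Fin 2`. -/
noncomputable def tens (u v : Fin 2 → ℂ) : Fin 2 × Fin 2 → ℂ := fun p => u p.1 * v p.2

/-- Standard Hermitian inner product on `ℂ² ⊗ ℂ²` (conjugate-linear in the
first slot). -/
noncomputable def ip4 (u v : Fin 2 × Fin 2 → ℂ) : ℂ := ∑ p, conj (u p) * v p

/-- Bloch vector `|θ,φ⟩ = cos(θ/2)|0⟩ + e^{iφ} sin(θ/2)|1⟩`. -/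
noncomputable def bloch (θ φ : ℝ) : Fin 2 → ℂ :=
  ![(Real.cos (θ / 2) : ℂ), Complex.exp (φ * Complex.I) * (Real.sin (θ / 2) : ℂ)]

/-- The orthonormal basis `B(θ,φ) = {|θ,φ⟩, |π−θ,π+φ⟩}` of `ℂ²`, indexed by the
outcome. -/
noncomputable def Bbasis (θ φ : ℝ) : Fin 2 → Fin 2 → ℂ :=
  ![bloch θ φ, bloch (Real.pi - θ) (Real.pi + φ)]

/-- The Born-rule empirical model of the state `ψ ∈ ℂ² ⊗ ℂ²` when Alice's
measurement `a_{i+1}` is given by the orthonormal basis `A i` and Bob's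
measurement `b_{j+1}` by the orthonormal basis `B j`:
`e_{{a_i,b_j}}(s,t) = |⟨α_{i,s} ⊗ β_{j,t}, ψ⟩|²`. -/
noncomputable def born (A B : Fin 2 → Fin 2 → Fin 2 → ℂ) (ψ : Fin 2 × Fin 2 → ℂ) :
    Fin 2 → Fin 2 → Fin 2 → Fin 2 → ℝ := fun i j s t =>
  ‖ip4 (tens (A i s) (B j t)) ψ‖ ^ 2

/-- An empirical model on the two-party Bell scenario: for each context
`{a_{i+1}, b_{j+1}}` a probability distribution on joint outcomes `(s, t)`. -/
def IsModel (e : Fin 2 → Fin 2 → Fin 2 → Fin 2 → ℝ) : Prop :=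
  (∀ i j s t, 0 ≤ e i j s t) ∧ ∀ i j, (∑ s, ∑ t, e i j s t) = 1

/-- Noncontextuality: a global probability distribution on assignments
`g : {a₁,a₂,b₁,b₂} → {0,1}` (with `X` encoded as `Fin 2 ⊕ Fin 2`, `inl i = a_{i+1}`,
`inr j = b_{j+1}`) marginalises to every context. -/
def Noncontextual (e : Fin 2 → Fin 2 → Fin 2 → Fin 2 → ℝ) : Prop :=
  ∃ d : (Fin 2 ⊕ Fin 2 → Fin 2) → ℝ,
    (∀ g, 0 ≤ d g) ∧ (∑ g, d g) = 1 ∧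
    ∀ i j s t, (∑ g ∈ Finset.univ.filter
        (fun g : Fin 2 ⊕ Fin 2 → Fin 2 => g (.inl i) = s ∧ g (.inr j) = t), d g)
      = e i j s t

/-- The noncontextual fraction of an empirical model. -/
noncomputable def NCF (e : Fin 2 → Fin 2 → Fin 2 → Fin 2 → ℝ) : ℝ :=
  sSup {l : ℝ | 0 ≤ l ∧ l ≤ 1 ∧
    ∃ eNC e' : Fin 2 → Fin 2 → Fin 2 → Fin 2 → ℝ,
      IsModel eNC ∧ Noncontextual eNC ∧ IsModel e' ∧
      ∀ i j s t, e i j s t = l * eNC i j s t + (1 - l) * e' i j s t}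

/-- The contextual fraction of an empirical model. -/
noncomputable def CF (e : Fin 2 → Fin 2 → Fin 2 → Fin 2 → ℝ) : ℝ := 1 - NCF e

/-- The two-qubit GHZ state `(|00⟩ + |11⟩)/√2`. -/
noncomputable def ghz : Fin 2 × Fin 2 → ℂ := fun p =>
  if p.1 = p.2 then ((Real.sqrt 2)⁻¹ : ℂ) else 0

/-- Alice's (= Bob's) equatorial measurements `a₁ = B(π/2, φ₁)`,
`a₂ = B(π/2, φ₂)`. -/
noncomputable def equatMeas (φ₁ φ₂ : ℝ) : Fin 2 → Fin 2 → Fin 2 → ℂ :=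
  ![Bbasis (Real.pi / 2) φ₁, Bbasis (Real.pi / 2) φ₂]


namespace GhzPf

open scoped ComplexConjugate

noncomputable def lam : ℝ := 2 - Real.sqrt 2
noncomputable def mu : ℝ := Real.sqrt 2 - 1

lemma sqrt2_sq : Real.sqrt 2 * Real.sqrt 2 = 2 := Real.mul_self_sqrt (by norm_num)
lemma sqrt2_gt : 1 < Real.sqrt 2 := by nlinarith [sqrt2_sq, Real.sqrt_nonneg 2]
lemma sqrt2_lt : Real.sqrt 2 < 1.5 := by nlinarith [sqrt2_sq, Real.sqrt_nonneg 2]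
lemma lam_pos : 0 < lam := by unfold lam; nlinarith [sqrt2_lt]
lemma mu_pos : 0 < mu := by unfold mu; nlinarith [sqrt2_gt]
lemma lam_add_mu : lam + mu = 1 := by unfold lam mu; ring

noncomputable def lo (c : ℝ) : ℝ := max (-1) ((c - mu)/lam)
noncomputable def hi (c : ℝ) : ℝ := min 1 ((c + mu)/lam)
noncomputable def sthr (c : ℝ) : ℝ := (max 0 (c - mu) - max 0 (-c - mu))/lam
noncomputable def e11 (X Y : ℝ) : ℝ := max (lo X) (min (hi X) (hi Y))
noncomputable def e22 (X Y : ℝ) : ℝ := max (lo Y) (min (hi Y) (e11 X Y))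

lemma div_lam_le_div_lam {a b : ℝ} (h : a ≤ b) : a/lam ≤ b/lam :=
  div_le_div_of_nonneg_right h lam_pos.le

lemma neg_one_le_div {c : ℝ} (hc : -1 ≤ c) : (-1 : ℝ) ≤ (c + mu)/lam := by
  rw [le_div_iff₀ lam_pos]
  have := lam_add_mu; nlinarith [mu_pos]

lemma div_le_one' {c : ℝ} (hc : c ≤ 1) : (c - mu)/lam ≤ 1 := by
  rw [div_le_one lam_pos]
  have := lam_add_mu; nlinarith [mu_pos]

lemma lo_le_hi {c : ℝ} (hc : |c| ≤ 1) : lo c ≤ hi c := by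
  obtain ⟨h1, h2⟩ := abs_le.mp hc
  apply max_le
  · exact le_min (by norm_num) (neg_one_le_div h1)
  · exact le_min (div_le_one' h2) (div_lam_le_div_lam (by nlinarith [mu_pos]))

lemma mem_interval {c t : ℝ} (hc : |c| ≤ 1) (h1 : lo c ≤ t) (h2 : t ≤ hi c) :
    |c - lam * t| ≤ mu ∧ |t| ≤ 1 := by
  obtain ⟨hc1, hc2⟩ := abs_le.mp hc
  have hl := lam_pos; have hm := mu_pos; have hlm := lam_add_mu
  have ha : (c - mu)/lam ≤ t := le_trans (le_max_right _ _) h1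
  have hb : t ≤ (c + mu)/lam := le_trans h2 (min_le_right _ _)
  have ha' : c - mu ≤ lam * t := by rwa [div_le_iff₀ hl, mul_comm] at ha
  have hb' : lam * t ≤ c + mu := by rwa [le_div_iff₀ hl, mul_comm] at hb
  refine ⟨abs_le.mpr ⟨by linarith, by linarith⟩, abs_le.mpr
    ⟨le_trans (le_max_left _ _) h1, le_trans h2 (min_le_left _ _)⟩⟩

lemma sthr_mem {c : ℝ} (hc : |c| ≤ 1) : lo c ≤ sthr c ∧ sthr c ≤ hi c := by
  obtain ⟨hc1, hc2⟩ := abs_le.mp hc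
  have hl := lam_pos; have hm := mu_pos; have hlm := lam_add_mu
  rcases le_total c (-mu) with h' | h'
  · have e1 : max 0 (c - mu) = 0 := max_eq_left (by linarith)
    have e2 : max 0 (-c - mu) = -c - mu := max_eq_right (by linarith)
    rw [sthr, e1, e2]
    constructor
    · apply max_le
      · rw [le_div_iff₀ hl]; nlinarith
      · apply div_lam_le_div_lam; linarith
    · apply le_min
      · rw [div_le_one hl]; linarith
      · apply div_lam_le_div_lam; linarith
  · rcases le_total c mu with h | h
    · have e1 : max 0 (c - mu) = 0 := max_eq_left (by linarith)
      have e2 : max 0 (-c - mu) = 0 := max_eq_left (by linarith)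
      rw [sthr, e1, e2]
      norm_num
      constructor
      · exact max_le (by norm_num) (div_nonpos_of_nonpos_of_nonneg (by linarith) hl.le)
      · exact le_min (by norm_num) (div_nonneg (by linarith) hl.le)
    · have e1 : max 0 (c - mu) = c - mu := max_eq_right (by linarith)
      have e2 : max 0 (-c - mu) = 0 := max_eq_left (by linarith)
      rw [sthr, e1, e2]
      constructor
      · apply max_le
        · rw [le_div_iff₀ hl]; nlinarith
        · apply div_lam_le_div_lam; linarith
      · apply le_min
        · rw [div_le_one hl]; linarith
        · apply div_lam_le_div_lam; linarith

lemma sthr_abs {c : ℝ} (hc : |c| ≤ 1) : lam * |sthr c| ≤ max 0 (|c| - mu) := by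
  have hl := lam_pos; have hm := mu_pos; have hlm := lam_add_mu
  rcases le_total c (-mu) with h' | h'
  · have e1 : max 0 (c - mu) = 0 := max_eq_left (by linarith)
    have e2 : max 0 (-c - mu) = -c - mu := max_eq_right (by linarith)
    rw [sthr, e1, e2, abs_div, abs_of_pos hl, mul_comm, div_mul_cancel₀ _ hl.ne']
    rw [show (0 : ℝ) - (-c - mu) = c + mu by ring, abs_of_nonpos (by linarith),
      abs_of_nonpos (by linarith)]
    have := le_max_right (0:ℝ) (-c - mu)
    linarith
  · rcases le_total c mu with h | h
    · have e1 : max 0 (c - mu) = 0 := max_eq_left (by linarith)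
      have e2 : max 0 (-c - mu) = 0 := max_eq_left (by linarith)
      rw [sthr, e1, e2]
      simpa using le_max_left _ _
    · have e1 : max 0 (c - mu) = c - mu := max_eq_right (by linarith)
      have e2 : max 0 (-c - mu) = 0 := max_eq_left (by linarith)
      rw [sthr, e1, e2, abs_div, abs_of_pos hl, mul_comm, div_mul_cancel₀ _ hl.ne']
      rw [show c - mu - 0 = c - mu by ring, abs_of_nonneg (by linarith),
        abs_of_nonneg (by linarith)]
      exact le_max_right _ _
lemma e11_mem {X Y : ℝ} (hX : |X| ≤ 1) : lo X ≤ e11 X Y ∧ e11 X Y ≤ hi X :=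
  ⟨le_max_left _ _, max_le (lo_le_hi hX) (min_le_left _ _)⟩

lemma e22_mem {X Y : ℝ} (hY : |Y| ≤ 1) : lo Y ≤ e22 X Y ∧ e22 X Y ≤ hi Y :=
  ⟨le_max_left _ _, max_le (lo_le_hi hY) (min_le_left _ _)⟩

lemma hkey {X Y : ℝ} (hX : |X| ≤ 1) (hY : |Y| ≤ 1) :
    lam * |e11 X Y - e22 X Y| ≤ max 0 (|X - Y| - 2*mu) := by
  have hl := lam_pos; have hm := mu_pos; have hlm := lam_add_mu
  set A := e11 X Y with hA
  set B := e22 X Y with hB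
  have hA1 : lo X ≤ A := (e11_mem hX).1
  have hA2 : A ≤ hi X := (e11_mem hX).2
  have hAa : |A| ≤ 1 := (mem_interval hX hA1 hA2).2
  have hBa : |B| ≤ 1 := (mem_interval hY (e22_mem hY).1 (e22_mem hY).2).2
  have habs := abs_le.mp hAa
  have habsB := abs_le.mp hBa
  have hzero : ∀ h0 : A = B, lam * |A - B| ≤ max 0 (|X - Y| - 2*mu) := by
    intro h0; rw [h0, sub_self, abs_zero, mul_zero]; exact le_max_left _ _
  have hfin : ∀ h0 : B - A ≤ (Y - X - 2*mu)/lam, 0 ≤ B - A →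
      lam * |A - B| ≤ max 0 (|X - Y| - 2*mu) := by
    intro h0 h1
    rw [abs_sub_comm, abs_of_nonneg h1]
    have h2 : lam * (B - A) ≤ lam * ((Y - X - 2*mu)/lam) :=
      mul_le_mul_of_nonneg_left h0 hl.le
    have h3 : lam * ((Y - X - 2*mu)/lam) = Y - X - 2*mu := by field_simp
    have h4 : Y - X ≤ |X - Y| := by
      rw [abs_sub_comm]; exact le_abs_self _
    have h5 := le_max_right (0:ℝ) (|X - Y| - 2*mu)
    linarith
  have hfin' : ∀ h0 : A - B ≤ (X - Y - 2*mu)/lam, 0 ≤ A - B →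
      lam * |A - B| ≤ max 0 (|X - Y| - 2*mu) := by
    intro h0 h1
    rw [abs_of_nonneg h1]
    have h2 : lam * (A - B) ≤ lam * ((X - Y - 2*mu)/lam) :=
      mul_le_mul_of_nonneg_left h0 hl.le
    have h3 : lam * ((X - Y - 2*mu)/lam) = X - Y - 2*mu := by field_simp
    have h4 : X - Y ≤ |X - Y| := le_abs_self _
    have h5 := le_max_right (0:ℝ) (|X - Y| - 2*mu)
    linarith
  rcases le_total A (lo Y) with h | h
  · -- B = lo Y
    have hBe : B = lo Y := by
      rw [hB, e22, ← hA, min_eq_right (le_trans h (lo_le_hi hY)), max_eq_left h]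
    rcases le_total ((Y - mu)/lam) (-1) with h2 | h2
    · have hloY : lo Y = -1 := max_eq_left h2
      rw [hloY] at h
      exact hzero (by rw [hBe, hloY]; linarith [habs.1])
    · have hloY : lo Y = (Y - mu)/lam := max_eq_right h2
      rcases le_total (hi Y) (hi X) with h3 | h3
      · -- min (hi X) (hi Y) = hi Y, so A ≥ hi Y ≥ lo Y ≥ A
        have hge : hi Y ≤ A := by
          rw [hA, e11]
          exact le_trans (le_of_eq (min_eq_right h3).symm) (le_max_right _ _)
        exact hzero (by have := lo_le_hi hY; rw [hBe]; linarith)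
      · have hgeX : hi X ≤ A := by
          rw [hA, e11]
          exact le_trans (le_of_eq (min_eq_left h3).symm) (le_max_right _ _)
        rcases le_total 1 ((X + mu)/lam) with h4 | h4
        · have hhiX : hi X = 1 := min_eq_left h4
          rw [hhiX] at hgeX
          have hBle : B ≤ 1 := by
            rw [hBe]
            exact le_trans (le_trans (lo_le_hi hY) (min_le_left _ _)) le_rfl
          exact hzero (by linarith)
        · have hhiX : hi X = (X + mu)/lam := min_eq_right h4
          rw [hhiX] at hgeX
          apply hfin
          · rw [hBe, hloY]
            have : (Y - mu)/lam - (X + mu)/lam = (Y - X - 2*mu)/lam := by ring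
            linarith
          · rw [hBe]; linarith
  · -- B = min (hi Y) A
    have hBe : B = min (hi Y) A := by
      rw [hB, e22, ← hA, max_eq_right (le_min (lo_le_hi hY) h)]
    rcases le_total A (hi Y) with h2 | h2
    · exact hzero (by rw [hBe, min_eq_right h2])
    · have hBe2 : B = hi Y := by rw [hBe, min_eq_left h2]
      rcases le_total 1 ((Y + mu)/lam) with h3 | h3
      · have : hi Y = 1 := min_eq_left h3
        exact hzero (by rw [hBe2, this]; linarith [habs.2])
      · have hhiY : hi Y = (Y + mu)/lam := min_eq_right h3
        rcases max_cases (lo X) (min (hi X) (hi Y)) with ⟨he, _⟩ | ⟨he, _⟩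
        · -- A = lo X
          have hAlo : A = lo X := by rw [hA, e11, he]
          rcases le_total ((X - mu)/lam) (-1) with h4 | h4
          · have hlo1 : lo X = -1 := max_eq_left h4
            have hA1' : A = -1 := by rw [hAlo, hlo1]
            exact hzero (le_antisymm (by rw [hA1']; exact habsB.1)
              (by rw [hBe2]; exact h2))
          · have hloX : lo X = (X - mu)/lam := max_eq_right h4
            apply hfin'
            · rw [hAlo, hloX, hBe2, hhiY]
              have : (X - mu)/lam - (Y + mu)/lam = (X - Y - 2*mu)/lam := by ring
              linarith
            · rw [hBe2]; linarith
        · -- A = min (hi X) (hi Y) ≤ hi Y ≤ A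
          have : A ≤ hi Y := by rw [hA, e11, he]; exact min_le_right _ _
          exact hzero (by rw [hBe2]; linarith)
lemma chsh {C X Y sp : ℝ} (hC : |C| ≤ 1) (hX : |X| ≤ 1) (hY : |Y| ≤ 1) (hsp : |sp| ≤ 1)
    (hXY : |X - Y| ≤ 2 * |sp|) (hs : |sp| + |C| ≤ Real.sqrt 2) :
    |sthr C| + |e11 X Y - e22 X Y| / 2 ≤ 1 := by
  have hl := lam_pos; have hm := mu_pos
  have hsabs := sthr_abs hC
  have hk := hkey hX hY
  have hmu : mu = Real.sqrt 2 - 1 := rfl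
  have hlam : lam = 2 - Real.sqrt 2 := rfl
  have h : lam * (|sthr C| + |e11 X Y - e22 X Y| / 2) ≤ lam * 1 := by
    have expand : lam * (|sthr C| + |e11 X Y - e22 X Y| / 2)
        = lam * |sthr C| + lam * |e11 X Y - e22 X Y| / 2 := by ring
    rw [expand, mul_one]
    rcases max_cases (0:ℝ) (|C| - mu) with ⟨e1, e1'⟩ | ⟨e1, e1'⟩ <;>
      rcases max_cases (0:ℝ) (|X - Y| - 2*mu) with ⟨e2, e2'⟩ | ⟨e2, e2'⟩ <;>
      rw [e1] at hsabs <;> rw [e2] at hk <;>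
      linarith [abs_nonneg (sthr C), abs_nonneg (e11 X Y - e22 X Y)]
  exact (mul_le_mul_iff_right₀ hl).mp h

noncomputable def aa (C X Y : ℝ) : ℝ := ((e11 X Y + e22 X Y)/2 + sthr C)/2
noncomputable def bb (C X Y : ℝ) : ℝ := ((e11 X Y + e22 X Y)/2 - sthr C)/2
noncomputable def cc (X Y : ℝ) : ℝ := (e11 X Y - e22 X Y)/2

lemma abc_bound {C X Y sp : ℝ} (hC : |C| ≤ 1) (hX : |X| ≤ 1) (hY : |Y| ≤ 1) (hsp : |sp| ≤ 1)
    (hXY : |X - Y| ≤ 2 * |sp|) (hs : |sp| + |C| ≤ Real.sqrt 2) :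
    |aa C X Y| + |bb C X Y| + |cc X Y| ≤ 1 := by
  have h1 := chsh hC hX hY hsp hXY hs
  have hA := abs_le.mp (mem_interval hX (e11_mem hX (Y := Y)).1 (e11_mem hX).2).2
  have hB := abs_le.mp (mem_interval hY (e22_mem hY (X := X)).1 (e22_mem hY).2).2
  have da : aa C X Y = ((e11 X Y + e22 X Y)/2 + sthr C)/2 := rfl
  have db : bb C X Y = ((e11 X Y + e22 X Y)/2 - sthr C)/2 := rfl
  have dc : cc X Y = (e11 X Y - e22 X Y)/2 := rfl
  have hs1 := le_abs_self (sthr C)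
  have hs2 := neg_abs_le (sthr C)
  have hd1 := le_abs_self (e11 X Y - e22 X Y)
  have hd2 := neg_abs_le (e11 X Y - e22 X Y)
  rcases abs_cases (aa C X Y) with ⟨ea, _⟩ | ⟨ea, _⟩ <;>
    rcases abs_cases (bb C X Y) with ⟨eb, _⟩ | ⟨eb, _⟩ <;>
    rcases abs_cases (cc X Y) with ⟨ec, _⟩ | ⟨ec, _⟩ <;>
    rw [ea, eb, ec] <;> linarith

noncomputable def sg : Fin 2 → ℝ := ![1, -1]

noncomputable def wfun (a b c r : ℝ) : Fin 2 → Fin 2 → Fin 2 → Fin 2 → ℝ :=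
  fun s1 s2 t1 t2 =>
  ![![![![(max a 0 + r/2)/2, max c 0/4],![max (-c) 0/4, (max (-a) 0 + r/2)/2]],
     ![![max c 0/4, max b 0/2],![max (-b) 0/2, max (-c) 0/4]]],
    ![![![max (-c) 0/4, max (-b) 0/2],![max b 0/2, max c 0/4]],
     ![![(max (-a) 0 + r/2)/2, max (-c) 0/4],![max c 0/4, (max a 0 + r/2)/2]]]] s1 s2 t1 t2

lemma max_add_max_neg (x : ℝ) : max x 0 + max (-x) 0 = |x| := by
  rcases le_total 0 x with h | h
  · rw [max_eq_left h, max_eq_right (by linarith), abs_of_nonneg h]; ring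
  · rw [max_eq_right h, max_eq_left (by linarith), abs_of_nonpos h]; ring

lemma max_sub_max_neg (x : ℝ) : max x 0 - max (-x) 0 = x := by
  rcases le_total 0 x with h | h
  · rw [max_eq_left h, max_eq_right (by linarith)]; ring
  · rw [max_eq_right h, max_eq_left (by linarith)]; ring

def asgEquiv : ((Fin 2 × Fin 2) × (Fin 2 × Fin 2)) ≃ (Fin 2 ⊕ Fin 2 → Fin 2) where
  toFun q := Sum.elim ![q.1.1, q.1.2] ![q.2.1, q.2.2]
  invFun g := ((g (.inl 0), g (.inl 1)), (g (.inr 0), g (.inr 1)))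
  left_inv := by rintro ⟨⟨a, b⟩, ⟨c, d⟩⟩; simp
  right_inv := by
    intro g; funext z
    rcases z with i | i <;> fin_cases i <;> simp

lemma sum_quad (F : (Fin 2 ⊕ Fin 2 → Fin 2) → ℝ) :
    ∑ g, F g = ∑ s1 : Fin 2, ∑ s2 : Fin 2, ∑ t1 : Fin 2, ∑ t2 : Fin 2,
      F (Sum.elim ![s1, s2] ![t1, t2]) := by
  rw [← Fintype.sum_equiv asgEquiv (fun q => F (asgEquiv q)) F (fun q => rfl)]
  rw [Fintype.sum_prod_type]
  simp only [Fintype.sum_prod_type]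
  rfl

lemma wfun_nonneg (a b c r : ℝ) (hr : 0 ≤ r) (s1 s2 t1 t2 : Fin 2) :
    0 ≤ wfun a b c r s1 s2 t1 t2 := by
  fin_cases s1 <;> fin_cases s2 <;> fin_cases t1 <;> fin_cases t2 <;>
    simp [wfun] <;> positivity
lemma wfun_total (a b c r : ℝ) (hr : r = 1 - |a| - |b| - |c|) :
    (∑ g : Fin 2 ⊕ Fin 2 → Fin 2,
      wfun a b c r (g (.inl 0)) (g (.inl 1)) (g (.inr 0)) (g (.inr 1))) = 1 := by
  rw [sum_quad]
  simp only [Sum.elim_inl, Sum.elim_inr, Fin.sum_univ_two, wfun,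
    Matrix.cons_val_zero, Matrix.cons_val_one, Matrix.head_cons]
  have ha := max_add_max_neg a
  have hb := max_add_max_neg b
  have hc := max_add_max_neg c
  linarith

set_option maxHeartbeats 2000000 in
lemma wfun_marg (a b c r : ℝ) (hr : r = 1 - |a| - |b| - |c|) (i j s t : Fin 2) :
    (∑ g ∈ Finset.univ.filter
        (fun g : Fin 2 ⊕ Fin 2 → Fin 2 => g (.inl i) = s ∧ g (.inr j) = t),
      wfun a b c r (g (.inl 0)) (g (.inl 1)) (g (.inr 0)) (g (.inr 1)))
    = (1 + sg s * sg t * ![![a+b+c, a-b],![a-b, a+b-c]] i j)/4 := by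
  rw [Finset.sum_filter, sum_quad]
  have ha := max_add_max_neg a
  have hb := max_add_max_neg b
  have hc := max_add_max_neg c
  have ha' := max_sub_max_neg a
  have hb' := max_sub_max_neg b
  have hc' := max_sub_max_neg c
  fin_cases i <;> fin_cases j <;> fin_cases s <;> fin_cases t <;>
    simp only [Sum.elim_inl, Sum.elim_inr, Fin.sum_univ_two, wfun, sg,
      Matrix.cons_val_zero, Matrix.cons_val_one, Matrix.head_cons, Fin.isValue] <;>
    norm_num <;>
    linarith

lemma conj_exp_mul_I (a : ℝ) : conj (Complex.exp (a * Complex.I)) = Complex.exp (-a * Complex.I) := by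
  rw [← Complex.exp_conj]
  congr 1
  simp [Complex.conj_I]

lemma key (a b : ℝ) :
    ‖ip4 (tens (bloch (Real.pi/2) a) (bloch (Real.pi/2) b)) ghz‖^2
      = (1 + Real.cos (a+b))/4 := by
  have hb : ∀ c : ℝ, bloch (Real.pi/2) c
      = ![((Real.sqrt 2/2 : ℝ) : ℂ), Complex.exp (c * Complex.I) * ((Real.sqrt 2/2 : ℝ) : ℂ)] := by
    intro c
    unfold bloch
    rw [show Real.pi/2/2 = Real.pi/4 by ring, Real.cos_pi_div_four, Real.sin_pi_div_four]
  have hs : ((Real.sqrt 2 / 2 : ℝ) : ℂ) * ((Real.sqrt 2 / 2 : ℝ) : ℂ) = (2 : ℂ)⁻¹ := by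
    norm_cast
    rw [show Real.sqrt 2 / 2 * (Real.sqrt 2 / 2) = Real.sqrt 2 * Real.sqrt 2 / 4 by ring,
      Real.mul_self_sqrt (by norm_num)]
    norm_num
  have he : Complex.exp (-(a:ℂ) * Complex.I) * Complex.exp (-(b:ℂ) * Complex.I)
      = Complex.exp (-((a:ℂ)+(b:ℂ)) * Complex.I) := by
    rw [← Complex.exp_add]; congr 1; ring
  have h1 : ip4 (tens (bloch (Real.pi/2) a) (bloch (Real.pi/2) b)) ghz
      = ((Real.sqrt 2 : ℝ) : ℂ)⁻¹ * 2⁻¹ * (1 + Complex.exp (-((a:ℂ)+(b:ℂ)) * Complex.I)) := by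
    rw [hb, hb]
    unfold ip4 tens ghz
    rw [Fintype.sum_prod_type]
    simp only [Fin.sum_univ_two, Matrix.cons_val_zero, Matrix.cons_val_one, Matrix.head_cons,
      map_mul, Complex.conj_ofReal, conj_exp_mul_I, ↓reduceIte, mul_zero, zero_mul, add_zero, zero_add]
    rw [show Complex.exp (-(a:ℂ)*Complex.I)*((Real.sqrt 2/2:ℝ):ℂ)*(Complex.exp (-(b:ℂ)*Complex.I)*((Real.sqrt 2/2:ℝ):ℂ))
        = ((Real.sqrt 2/2:ℝ):ℂ)*((Real.sqrt 2/2:ℝ):ℂ)*(Complex.exp (-(a:ℂ)*Complex.I)*Complex.exp (-(b:ℂ)*Complex.I)) by ring,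
      hs, he]
    norm_num
    ring
  rw [h1]
  have h2 : Complex.exp (-((a:ℂ)+(b:ℂ)) * Complex.I)
      = ((Real.cos (a+b) : ℝ) : ℂ) + ((- Real.sin (a+b) : ℝ) : ℂ) * Complex.I := by
    rw [Complex.exp_mul_I, show (-((a:ℂ)+(b:ℂ))) = ((-(a+b) : ℝ) : ℂ) by push_cast; ring,
      ← Complex.ofReal_cos, ← Complex.ofReal_sin, Real.cos_neg, Real.sin_neg]
  rw [h2, norm_mul, mul_pow]
  have h3 : ‖(1 : ℂ) + (((Real.cos (a+b) : ℝ) : ℂ) + ((- Real.sin (a+b) : ℝ) : ℂ) * Complex.I)‖^2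
      = (1 + Real.cos (a+b))^2 + (Real.sin (a+b))^2 := by
    rw [show (1 : ℂ) + (((Real.cos (a+b) : ℝ) : ℂ) + ((- Real.sin (a+b) : ℝ) : ℂ) * Complex.I)
        = ((1 + Real.cos (a+b) : ℝ) : ℂ) + ((- Real.sin (a+b) : ℝ) : ℂ) * Complex.I by push_cast; ring]
    rw [Complex.sq_norm, Complex.normSq_add_mul_I]
    ring
  rw [h3]
  have h4 : ‖((Real.sqrt 2 : ℝ) : ℂ)⁻¹ * 2⁻¹‖^2 = 8⁻¹ := by
    rw [norm_mul, norm_inv, norm_inv, Complex.norm_real, Real.norm_eq_abs,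
      abs_of_nonneg (Real.sqrt_nonneg 2)]
    have : ‖(2:ℂ)‖ = 2 := by norm_num
    rw [this, mul_pow, show ((Real.sqrt 2)⁻¹)^2 = ((Real.sqrt 2)^2)⁻¹ by ring,
      Real.sq_sqrt (by norm_num : (2:ℝ) ≥ 0)]
    norm_num
  rw [h4]
  nlinarith [Real.sin_sq_add_cos_sq (a+b)]

lemma born_case (u v : ℝ) (s t : Fin 2) :
    ‖ip4 (tens (Bbasis (Real.pi/2) u s) (Bbasis (Real.pi/2) v t)) ghz‖^2
      = (1 + sg s * sg t * Real.cos (u + v))/4 := by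
  have hpi : Real.pi - Real.pi/2 = Real.pi/2 := by ring
  fin_cases s <;> fin_cases t <;>
    simp [Bbasis, sg, hpi]
  · rw [key]
  · rw [key, show u + (Real.pi + v) = (u + v) + Real.pi by ring, Real.cos_add_pi]
  · rw [key, show (Real.pi + u) + v = (u + v) + Real.pi by ring, Real.cos_add_pi]
  · rw [key, show (Real.pi + u) + (Real.pi + v) = (u + v) + 2*Real.pi by ring,
      Real.cos_add_two_pi]
lemma born_eq (φ₁ φ₂ : ℝ) (i j s t : Fin 2) :
    born (equatMeas φ₁ φ₂) (equatMeas φ₁ φ₂) ghz i j s t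
      = (1 + sg s * sg t * Real.cos (![φ₁,φ₂] i + ![φ₁,φ₂] j)) / 4 := by
  unfold born equatMeas
  fin_cases i <;> fin_cases j <;>
    simp only [Fin.isValue, Matrix.cons_val_zero, Matrix.cons_val_one, Matrix.head_cons,
      Matrix.cons_val', Matrix.cons_val_fin_one, Matrix.empty_val', Fin.zero_eta, Fin.mk_one] <;>
    exact born_case _ _ _ _

end GhzPf

open GhzPf in
/-- for all equatorial scenarios `S(B(π/2,φ₁), B(π/2,φ₂))`, the
contextual fraction of the GHZ state is at most `√2 − 1`; in particular the
model is never strongly contextual. -/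
theorem ghz_equatorial_contextual_fraction_bound (φ₁ φ₂ : ℝ) :
    CF (born (equatMeas φ₁ φ₂) (equatMeas φ₁ φ₂) ghz) ≤ Real.sqrt 2 - 1 ∧
    CF (born (equatMeas φ₁ φ₂) (equatMeas φ₁ φ₂) ghz) < 1 := by
  have hNCF : (2 : ℝ) - Real.sqrt 2 ≤ NCF (born (equatMeas φ₁ φ₂) (equatMeas φ₁ φ₂) ghz) := by
    set C := Real.cos (φ₁ + φ₂) with hCdef
    set X := Real.cos (φ₁ + φ₁) with hXdef
    set Y := Real.cos (φ₂ + φ₂) with hYdef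
    have hC : |C| ≤ 1 := Real.abs_cos_le_one _
    have hX : |X| ≤ 1 := Real.abs_cos_le_one _
    have hY : |Y| ≤ 1 := Real.abs_cos_le_one _
    have hsp : |Real.sin (φ₁ + φ₂)| ≤ 1 := Real.abs_sin_le_one _
    have hXY : |X - Y| ≤ 2 * |Real.sin (φ₁ + φ₂)| := by
      have e1 : X = C * Real.cos (φ₁ - φ₂) - Real.sin (φ₁ + φ₂) * Real.sin (φ₁ - φ₂) := by
        rw [hXdef, hCdef, show φ₁ + φ₁ = (φ₁ + φ₂) + (φ₁ - φ₂) by ring, Real.cos_add]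
      have e2 : Y = C * Real.cos (φ₁ - φ₂) + Real.sin (φ₁ + φ₂) * Real.sin (φ₁ - φ₂) := by
        rw [hYdef, hCdef, show φ₂ + φ₂ = (φ₁ + φ₂) - (φ₁ - φ₂) by ring, Real.cos_sub]
      rw [e1, e2, show C * Real.cos (φ₁ - φ₂) - Real.sin (φ₁ + φ₂) * Real.sin (φ₁ - φ₂)
          - (C * Real.cos (φ₁ - φ₂) + Real.sin (φ₁ + φ₂) * Real.sin (φ₁ - φ₂))
          = -(2 * (Real.sin (φ₁ + φ₂) * Real.sin (φ₁ - φ₂))) by ring, abs_neg, abs_mul, abs_mul]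
      have h1 := Real.abs_sin_le_one (φ₁ - φ₂)
      have h2 := abs_nonneg (Real.sin (φ₁ + φ₂))
      rw [abs_of_nonneg (by norm_num : (0:ℝ) ≤ 2)]
      nlinarith
    have hs : |Real.sin (φ₁ + φ₂)| + |C| ≤ Real.sqrt 2 := by
      have h2 : (|Real.sin (φ₁ + φ₂)| + |C|)^2 ≤ 2 := by
        nlinarith [Real.sin_sq_add_cos_sq (φ₁ + φ₂), sq_abs (Real.sin (φ₁ + φ₂)), sq_abs C,
          sq_nonneg (|Real.sin (φ₁ + φ₂)| - |C|)]
      calc |Real.sin (φ₁ + φ₂)| + |C| = Real.sqrt ((|Real.sin (φ₁ + φ₂)| + |C|)^2) :=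
            (Real.sqrt_sq (by positivity)).symm
        _ ≤ Real.sqrt 2 := Real.sqrt_le_sqrt h2
    have habc := abc_bound hC hX hY hsp hXY hs
    set Em : Fin 2 → Fin 2 → ℝ := ![![e11 X Y, sthr C], ![sthr C, e22 X Y]] with hEm
    have hmem : ∀ i j, |Real.cos (![φ₁, φ₂] i + ![φ₁, φ₂] j) - lam * Em i j| ≤ mu
        ∧ |Em i j| ≤ 1 := by
      intro i j
      fin_cases i <;> fin_cases j <;>
        simp only [hEm, Fin.isValue, Matrix.cons_val_zero, Matrix.cons_val_one, Matrix.head_cons,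
          Matrix.cons_val', Matrix.cons_val_fin_one, Matrix.empty_val', Fin.zero_eta, Fin.mk_one]
      · exact mem_interval hX (e11_mem hX).1 (e11_mem hX).2
      · exact mem_interval hC (sthr_mem hC).1 (sthr_mem hC).2
      · rw [show Real.cos (φ₂ + φ₁) = C by rw [hCdef, add_comm]]
        exact mem_interval hC (sthr_mem hC).1 (sthr_mem hC).2
      · exact mem_interval hY (e22_mem hY).1 (e22_mem hY).2
    rw [NCF]
    apply le_csSup
    · exact ⟨1, fun l hl => hl.2.1⟩
    · refine ⟨by nlinarith [sqrt2_lt], by nlinarith [sqrt2_gt],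
        (fun i j s t => (1 + sg s * sg t * Em i j)/4),
        (fun i j s t =>
          (1 + sg s * sg t * ((Real.cos (![φ₁, φ₂] i + ![φ₁, φ₂] j) - lam * Em i j)/mu))/4),
        ⟨?_, ?_⟩, ?_, ⟨?_, ?_⟩, ?_⟩
      · intro i j s t
        obtain ⟨l1, l2⟩ := abs_le.mp (hmem i j).2
        fin_cases s <;> fin_cases t <;> simp [sg] <;> linarith
      · intro i j
        simp [sg, Fin.sum_univ_two]
        ring
      · -- Noncontextual
        refine ⟨fun g => wfun (aa C X Y) (bb C X Y) (cc X Y)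
          (1 - |aa C X Y| - |bb C X Y| - |cc X Y|)
          (g (.inl 0)) (g (.inl 1)) (g (.inr 0)) (g (.inr 1)), ?_, ?_, ?_⟩
        · intro g
          exact wfun_nonneg _ _ _ _ (by linarith) _ _ _ _
        · exact wfun_total _ _ _ _ rfl
        · intro i j s t
          rw [wfun_marg _ _ _ _ rfl i j s t]
          have h1 : aa C X Y + bb C X Y + cc X Y = e11 X Y := by unfold aa bb cc; ring
          have h2 : aa C X Y + bb C X Y - cc X Y = e22 X Y := by unfold aa bb cc; ring
          have h3 : aa C X Y - bb C X Y = sthr C := by unfold aa bb; ring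
          fin_cases i <;> fin_cases j <;>
            simp only [hEm, Fin.isValue, Matrix.cons_val_zero, Matrix.cons_val_one,
              Matrix.head_cons, Matrix.cons_val', Matrix.cons_val_fin_one, Matrix.empty_val',
              Fin.zero_eta, Fin.mk_one] <;>
            simp only [h1, h2, h3]
      · intro i j s t
        have hq : |(Real.cos (![φ₁, φ₂] i + ![φ₁, φ₂] j) - lam * Em i j)/mu| ≤ 1 := by
          rw [abs_div, abs_of_pos mu_pos, div_le_one mu_pos]
          exact (hmem i j).1
        obtain ⟨l1, l2⟩ := abs_le.mp hq
        fin_cases s <;> fin_cases t <;> simp [sg] <;> linarith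
      · intro i j
        simp [sg, Fin.sum_univ_two]
        ring
      · intro i j s t
        rw [born_eq]
        rw [show (2 : ℝ) - Real.sqrt 2 = lam from rfl,
          show (1 : ℝ) - lam = mu by have := lam_add_mu; linarith]
        have hmu0 : mu ≠ 0 := ne_of_gt mu_pos
        field_simp
        linear_combination (-1) * lam_add_mu
  have hlt := GhzPf.sqrt2_lt
  have hgt := GhzPf.sqrt2_gt
  unfold CF
  constructor
  · linarith
  · linarith
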